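/- arXiv:1706.00483 — 7 statements merged into one kernel-verified Lean document; each statement's English description precedes it below -/
import Mathlib

section
/- Let τ > 0 and define H : ℝ² → ℝ by H(p) = 1/τ − √(((1+τ)/τ)² + (2/τ)|p|²). Then for every p ∈ ℝ² \ {0}, the implicit relation τ/(1+τ) = ⨍_{S^1} dv/(−H(p) + 1/τ + √(2/τ) v·p) holds. -/
open MeasureTheory Metric RealInnerProductSpace Set Real Filter Topology intervalIntegral

-- derivative step
lemma hasDerivAt_G (s b : ℝ) (hb : |b| < s) {x : ℝ} (hx : x ∈ Ioo (-π) π) :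
    HasDerivAt (fun x => (2 / Real.sqrt (s^2 - b^2)) * Real.arctan (Real.sqrt ((s-b)/(s+b)) * Real.tan (x/2)))
      ((s + b * Real.cos x)⁻¹) x := by
  have h1 : 0 < s - b := by cases abs_lt.mp hb; linarith
  have h2 : 0 < s + b := by cases abs_lt.mp hb; linarith
  have hD : 0 < s^2 - b^2 := by nlinarith
  set k := Real.sqrt ((s-b)/(s+b)) with hk
  have hk2 : k^2 = (s-b)/(s+b) := Real.sq_sqrt (by positivity)
  have hkpos : 0 < k := Real.sqrt_pos.mpr (by positivity)
  have hcos : Real.cos (x/2) ≠ 0 := by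
    have : x/2 ∈ Ioo (-(π/2)) (π/2) := by constructor <;> [linarith [hx.1]; linarith [hx.2]]
    exact (Real.cos_pos_of_mem_Ioo this).ne'
  have htan : HasDerivAt (fun y => Real.tan (y/2)) (1 / Real.cos (x/2)^2 * (2⁻¹)) x := by
    exact ((Real.hasDerivAt_tan hcos).comp x ((hasDerivAt_id x).div_const 2)).congr_deriv (by simp : _ = 1 / Real.cos (x/2)^2 * (2⁻¹))
  have harctan : HasDerivAt (fun y => Real.arctan (k * Real.tan (y/2)))
      ((1 + (k * Real.tan (x/2))^2)⁻¹ * (k * (1 / Real.cos (x/2)^2 * 2⁻¹))) x := by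
    have := (Real.hasDerivAt_arctan (k * Real.tan (x/2))).comp x (htan.const_mul k)
    exact this.congr_deriv (by ring)
  have := harctan.const_mul (2 / Real.sqrt (s^2 - b^2))
  refine this.congr_deriv ?_; symm
  -- now algebra
  have hc2 : Real.cos (x/2)^2 = 1/2 + Real.cos x/2 := by
    have h := Real.cos_sq (x/2); rwa [show 2*(x/2) = x by ring] at h
  have hs2 : Real.sin (x/2)^2 = 1/2 - Real.cos x/2 := by
    have h := Real.sin_sq_add_cos_sq (x/2); linarith
  have hQ : s + b * Real.cos x > 0 := by
    have := Real.neg_one_le_cos x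
    have := Real.cos_le_one x
    have h3 : |b * Real.cos x| ≤ |b| := by
      rw [abs_mul]; exact mul_le_of_le_one_right (abs_nonneg b) (Real.abs_cos_le_one x)
    have := neg_abs_le (b * Real.cos x)
    have := abs_lt.mp hb
    linarith [this.1, abs_le.mp h3]
  have hsqD : Real.sqrt (s^2-b^2) > 0 := Real.sqrt_pos.mpr hD
  have hkD : k * (s + b) = Real.sqrt (s^2 - b^2) := by
    rw [hk, ← Real.sqrt_sq h2.le, ← Real.sqrt_mul (by positivity)]
    congr 1
    rw [Real.sqrt_sq h2.le, div_mul_eq_mul_div, div_eq_iff h2.ne']; ring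
  rw [Real.tan_eq_sin_div_cos]
  have hmp : (k * (Real.sin (x/2) / Real.cos (x/2)))^2
      = ((s-b)/(s+b)) * (Real.sin (x/2)^2/Real.cos (x/2)^2) := by
    rw [mul_pow, hk2, div_pow]
  have h1pk : 1 + (k * (Real.sin (x/2) / Real.cos (x/2)))^2
      = (s + b * Real.cos x) / ((s+b) * Real.cos (x/2)^2) := by
    rw [hmp, hc2, hs2]
    have hcc : (1:ℝ)/2 + Real.cos x/2 ≠ 0 := by rw [← hc2]; exact pow_ne_zero 2 hcos
    have hT : s + s*Real.cos x + b + b*Real.cos x ≠ 0 := by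
      have he : s + s*Real.cos x + b + b*Real.cos x = (s+b)*(2*(1/2 + Real.cos x/2)) := by ring
      rw [he]
      exact mul_ne_zero h2.ne' (mul_ne_zero two_ne_zero hcc)
    have h1c : (1:ℝ) + Real.cos x ≠ 0 := by
      intro h; apply hcc; linarith [h]
    field_simp
    ring
  rw [h1pk]
  field_simp
  rw [← hkD]
  ring

lemma integral_Ioo_inv_add_cos (s b : ℝ) (hb : |b| < s) :
    ∫ θ in Ioo (-π) π, (s + b * Real.cos θ)⁻¹ = 2 * π / Real.sqrt (s^2 - b^2) := by
  have hbb := abs_lt.mp hb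
  have hD : 0 < s^2 - b^2 := by nlinarith
  have hsqD : 0 < Real.sqrt (s^2 - b^2) := Real.sqrt_pos.mpr hD
  have hkpos : 0 < Real.sqrt ((s-b)/(s+b)) := Real.sqrt_pos.mpr (by apply div_pos <;> linarith)
  set f : ℝ → ℝ := fun θ => (s + b * Real.cos θ)⁻¹ with hfdef
  have hpos : ∀ θ, 0 < s + b * Real.cos θ := by
    intro θ
    have h3 : |b * Real.cos θ| ≤ |b| := by
      rw [abs_mul]; exact mul_le_of_le_one_right (abs_nonneg b) (Real.abs_cos_le_one θ)
    linarith [abs_le.mp h3]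
  have hf : Continuous f :=
    (continuous_const.add (continuous_const.mul Real.continuous_cos)).inv₀
      (fun θ => (hpos θ).ne')
  set G : ℝ → ℝ := fun x =>
    (2 / Real.sqrt (s^2 - b^2)) * Real.arctan (Real.sqrt ((s-b)/(s+b)) * Real.tan (x/2)) with hGdef
  have hG : ∀ x ∈ Ioo (-π) π, HasDerivAt G (f x) x := fun x hx => hasDerivAt_G s b hb hx
  have hGodd : ∀ x, G (-x) = - G x := by
    intro x
    simp [hGdef, neg_div, Real.tan_neg, Real.arctan_neg, mul_neg]
  set P : ℝ → ℝ := fun y => ∫ t in (0:ℝ)..y, f t with hPdef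
  have hP : Continuous P :=
    intervalIntegral.continuous_primitive (fun a b => hf.intervalIntegrable a b) 0
  have hsplit : ∀ x : ℝ, P x - P (-x) = ∫ t in (-x)..x, f t := by
    intro x
    have h1 := intervalIntegral.integral_add_adjacent_intervals (μ := volume)
      (hf.intervalIntegrable (-x) 0) (hf.intervalIntegrable 0 x)
    have h2 : (∫ t in (-x)..(0:ℝ), f t) = - P (-x) := by
      rw [hPdef]; simp only; rw [← intervalIntegral.integral_symm]
    rw [← h1, h2, hPdef]
    ring
  set Ψ : ℝ → ℝ := fun x => P x - P (-x) with hΨdef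
  have hΨc : Tendsto Ψ (𝓝[<] π) (𝓝 (Ψ π)) :=
    ((hP.sub (hP.comp continuous_neg)).tendsto π).mono_left nhdsWithin_le_nhds
  have hev : ∀ᶠ x in 𝓝[<] π, Ψ x = 2 * G x := by
    filter_upwards [Ioo_mem_nhdsLT_of_mem (⟨Real.pi_pos, le_refl π⟩ : π ∈ Ioc 0 π)] with x hx
    have hxx : -x ≤ x := by linarith [hx.1]
    have hFTC : (∫ t in (-x)..x, f t) = G x - G (-x) := by
      apply intervalIntegral.integral_eq_sub_of_hasDerivAt
      · intro t ht
        rw [uIcc_of_le hxx] at ht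
        exact hG t ⟨by linarith [ht.1, hx.2], by linarith [ht.2, hx.2]⟩
      · exact hf.intervalIntegrable _ _
    rw [hΨdef]
    simp only
    rw [hsplit, hFTC, hGodd]
    ring
  have hlim : Tendsto (fun x => 2 * G x) (𝓝[<] π) (𝓝 (2 * π / Real.sqrt (s^2 - b^2))) := by
    have t1 : Tendsto (fun x : ℝ => x/2) (𝓝[<] π) (𝓝[<] (π/2)) := by
      apply tendsto_nhdsWithin_of_tendsto_nhds_of_eventually_within
      · exact ((continuous_id.div_const 2).tendsto π).mono_left nhdsWithin_le_nhds
      · exact eventually_mem_nhdsWithin.mono fun x hx => by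
          have : x < π := hx
          exact mem_Iio.mpr (by linarith)
    have t3 : Tendsto (fun x : ℝ => Real.sqrt ((s-b)/(s+b)) * Real.tan (x/2)) (𝓝[<] π) atTop :=
      (Real.tendsto_tan_pi_div_two.comp t1).const_mul_atTop hkpos
    have t4 : Tendsto (fun x : ℝ => Real.arctan (Real.sqrt ((s-b)/(s+b)) * Real.tan (x/2)))
        (𝓝[<] π) (𝓝 (π/2)) :=
      (tendsto_nhds_of_tendsto_nhdsWithin Real.tendsto_arctan_atTop).comp t3
    have t5 := ((t4.const_mul (2 / Real.sqrt (s^2 - b^2))).const_mul 2)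
    convert t5 using 2
    field_simp
  have hfin : Ψ π = 2 * π / Real.sqrt (s^2 - b^2) :=
    tendsto_nhds_unique (hΨc.congr' hev) hlim
  have : Ψ π = ∫ θ in Ioo (-π) π, f θ := by
    rw [hΨdef]
    simp only
    rw [hsplit, intervalIntegral.integral_of_le (by linarith [Real.pi_pos]),
      MeasureTheory.integral_Ioc_eq_integral_Ioo]
  rw [← this, hfin]

noncomputable section
abbrev E2 := EuclideanSpace ℝ (Fin 2)

def eqv : E2 ≃ᵐ ℝ × ℝ := (MeasurableEquiv.toLp 2 (Fin 2 → ℝ)).symm.trans MeasurableEquiv.finTwoArrow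

lemma eqv_mp : MeasurePreserving eqv volume volume :=
  (volume_preserving_finTwoArrow ℝ).comp (EuclideanSpace.volume_preserving_symm_measurableEquiv_toLp (Fin 2))

lemma eqv_symm_apply (q : ℝ × ℝ) (i : Fin 2) : eqv.symm q i = ![q.1, q.2] i := rfl

example (q : ℝ × ℝ) : eqv.symm q 0 = q.1 := rfl
example (q : ℝ × ℝ) : eqv.symm q 1 = q.2 := rfl

lemma eqv_symm_norm (q : ℝ × ℝ) : ‖eqv.symm q‖ = Real.sqrt (q.1^2 + q.2^2) := by
  rw [EuclideanSpace.norm_eq]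
  congr 1
  rw [Fin.sum_univ_two]
  simp [eqv_symm_apply, sq_abs]

lemma eqv_symm_smul (r : ℝ) (q : ℝ × ℝ) : eqv.symm (r • q) = r • eqv.symm q := by
  ext i
  fin_cases i <;> simp [eqv_symm_apply]

def vθ (θ : ℝ) : E2 := eqv.symm (Real.cos θ, Real.sin θ)

lemma vθ_norm (θ : ℝ) : ‖vθ θ‖ = 1 := by
  rw [vθ, eqv_symm_norm, show ((Real.cos θ, Real.sin θ).1^2 + (Real.cos θ, Real.sin θ).2^2) = 1 by
    simpa [add_comm] using Real.sin_sq_add_cos_sq θ, Real.sqrt_one]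

lemma vθ_mem (θ : ℝ) : vθ θ ∈ sphere (0 : E2) 1 := by
  simp [mem_sphere_zero_iff_norm, vθ_norm]

def cpt (θ : ℝ) : sphere (0 : E2) 1 := ⟨vθ θ, vθ_mem θ⟩

def gg : ℝ → ℝ := (Ioo (0:ℝ) 1).indicator (fun _ => 2)

lemma I1 : ∫ r in Ioi (0:ℝ), r * gg r = 1 := by
  have h : ∀ r : ℝ, r * gg r = (Ioo (0:ℝ) 1).indicator (fun t => 2 * t) r := by
    intro r
    by_cases hr : r ∈ Ioo (0:ℝ) 1 <;>
      simp [gg, Set.indicator_of_mem, Set.indicator_of_notMem, hr, mul_comm]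
  simp_rw [h]
  rw [MeasureTheory.setIntegral_indicator measurableSet_Ioo,
    show Ioi (0:ℝ) ∩ Ioo 0 1 = Ioo 0 1 from Set.inter_eq_right.mpr (fun x hx => hx.1),
    ← MeasureTheory.integral_Ioc_eq_integral_Ioo,
    ← intervalIntegral.integral_of_le (by norm_num : (0:ℝ) ≤ 1),
    intervalIntegral.integral_const_mul, integral_id]
  norm_num

example : polarCoord.target = Ioi (0:ℝ) ×ˢ Ioo (-π) π := rfl
example (p : ℝ × ℝ) : polarCoord.symm p = (p.1 * Real.cos p.2, p.1 * Real.sin p.2) := rfl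

open Classical in
noncomputable def proj (x : E2) : sphere (0 : E2) 1 :=
  if hx : x = 0 then cpt 0 else ⟨‖x‖⁻¹ • x, by
    rw [mem_sphere_zero_iff_norm, norm_smul, norm_inv, norm_norm,
      inv_mul_cancel₀ (norm_ne_zero_iff.2 hx)]⟩

lemma I2 : ∫ r : Ioi (0:ℝ), gg r ∂(Measure.volumeIoiPow 1) = 1 := by
  rw [Measure.volumeIoiPow]
  simp only [ENNReal.ofReal]
  rw [integral_withDensity_eq_integral_smul ((measurable_subtype_coe.pow_const _).real_toNNReal) _,
    integral_subtype_comap measurableSet_Ioi (fun a => (a ^ 1).toNNReal • gg a),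
    setIntegral_congr_fun measurableSet_Ioi (g := fun r => r * gg r) ?_]
  · exact I1
  · intro x hx
    simp [NNReal.smul_def, Real.coe_toNNReal _ (le_of_lt hx), smul_eq_mul]

lemma proj_smul (r : ℝ) (hr : 0 < r) (θ : ℝ) : proj (r • vθ θ) = cpt θ := by
  have hv : vθ θ ≠ 0 := by
    intro h
    have := vθ_norm θ
    rw [h, norm_zero] at this
    norm_num at this
  have hx : r • vθ θ ≠ 0 := smul_ne_zero hr.ne' hv
  rw [proj, dif_neg hx]
  apply Subtype.ext
  show ‖r • vθ θ‖⁻¹ • (r • vθ θ) = vθ θ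
  rw [norm_smul, vθ_norm, mul_one, Real.norm_eq_abs, abs_of_pos hr, smul_smul,
    inv_mul_cancel₀ hr.ne', one_smul]

lemma norm_smul_vθ (r : ℝ) (hr : 0 ≤ r) (θ : ℝ) : ‖r • vθ θ‖ = r := by
  rw [norm_smul, vθ_norm, mul_one, Real.norm_eq_abs, abs_of_nonneg hr]

lemma lemA (F : sphere (0 : E2) 1 → ℝ) :
    ∫ v, F v ∂((volume : Measure E2).toSphere) = ∫ θ in Ioo (-π) π, F (cpt θ) := by
  have hdim : Module.finrank ℝ E2 = 2 := finrank_euclideanSpace_fin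
  have key := (Measure.measurePreserving_homeomorphUnitSphereProd
      (volume : Measure E2)).integral_comp (Homeomorph.measurableEmbedding _)
      (fun x : (sphere (0:E2) 1) × (Ioi (0:ℝ)) => F x.1 * gg x.2)
  calc ∫ v, F v ∂((volume : Measure E2).toSphere)
      = ∫ x : (sphere (0:E2) 1) × (Ioi (0:ℝ)), F x.1 * gg x.2
          ∂(((volume : Measure E2).toSphere).prod
            (Measure.volumeIoiPow (Module.finrank ℝ E2 - 1))) := by
        rw [hdim]
        show _ = ∫ x : (sphere (0:E2) 1) × (Ioi (0:ℝ)), F x.1 * gg x.2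
          ∂(((volume : Measure E2).toSphere).prod (Measure.volumeIoiPow 1))
        rw [MeasureTheory.integral_prod_mul F (fun r : Ioi (0:ℝ) => gg r), I2, mul_one]
    _ = ∫ x : ({(0:E2)}ᶜ : Set E2), F (proj x.1) * gg ‖x.1‖
          ∂((volume : Measure E2).comap Subtype.val) := by
        rw [← key]
        apply MeasureTheory.integral_congr_ae
        apply Filter.Eventually.of_forall
        intro x
        have hx : x.1 ≠ 0 := fun h => x.2 (by simp [h])
        show F _ * gg _ = _
        congr 2
        · apply Subtype.ext
          show (1:ℝ) • ‖x.1‖⁻¹ • x.1 = _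
          rw [proj, dif_neg hx, one_smul]
        · simp
    _ = ∫ x in ({(0:E2)}ᶜ : Set E2), F (proj x) * gg ‖x‖ ∂volume :=
        integral_subtype_comap (measurableSet_singleton (0:E2)).compl (fun x => F (proj x) * gg ‖x‖)
    _ = ∫ x : E2, F (proj x) * gg ‖x‖ ∂volume := by
        rw [restrict_compl_singleton]
    _ = ∫ q : ℝ × ℝ, F (proj (eqv.symm q)) * gg ‖eqv.symm q‖ := by
        rw [← (MeasurePreserving.symm eqv eqv_mp).integral_comp eqv.symm.measurableEmbedding
          (fun x : E2 => F (proj x) * gg ‖x‖)]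
    _ = ∫ q in polarCoord.target,
          q.1 • (F (proj (eqv.symm (polarCoord.symm q))) * gg ‖eqv.symm (polarCoord.symm q)‖) :=
        (integral_comp_polarCoord_symm _).symm
    _ = ∫ q in Ioi (0:ℝ) ×ˢ Ioo (-π) π, (q.1 * gg q.1) * F (cpt q.2) := by
        apply setIntegral_congr_fun (polarCoord.open_target.measurableSet)
        intro q hq
        simp only
        have hr : 0 < q.1 := hq.1
        have hsym : eqv.symm (polarCoord.symm q) = q.1 • vθ q.2 := by
          show eqv.symm (q.1 * Real.cos q.2, q.1 * Real.sin q.2) = _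
          rw [show (q.1 * Real.cos q.2, q.1 * Real.sin q.2)
              = q.1 • (Real.cos q.2, Real.sin q.2) from rfl, eqv_symm_smul]
          rfl
        rw [hsym, proj_smul _ hr, norm_smul_vθ _ hr.le, smul_eq_mul]
        ring
    _ = (∫ r in Ioi (0:ℝ), r * gg r) * ∫ θ in Ioo (-π) π, F (cpt θ) := by
        rw [Measure.volume_eq_prod]
        exact setIntegral_prod_mul (fun r => r * gg r) (fun θ => F (cpt θ)) _ _
    _ = ∫ θ in Ioo (-π) π, F (cpt θ) := by rw [I1, one_mul]

lemma shift_int (s b φ : ℝ) :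
    ∫ θ in Ioo (-π) π, (s + b * Real.cos (θ - φ))⁻¹ = ∫ θ in Ioo (-π) π, (s + b * Real.cos θ)⁻¹ := by
  have hper : Function.Periodic (fun θ : ℝ => (s + b * Real.cos θ)⁻¹) (2*π) := fun x => by
    simp [Real.cos_add_two_pi]
  have h1 : ∫ θ in Ioo (-π) π, (s + b * Real.cos (θ - φ))⁻¹
      = ∫ θ in (-π)..π, (s + b * Real.cos (θ - φ))⁻¹ := by
    rw [intervalIntegral.integral_of_le (by linarith [Real.pi_pos]),
      MeasureTheory.integral_Ioc_eq_integral_Ioo]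
  have h2 : ∫ θ in Ioo (-π) π, (s + b * Real.cos θ)⁻¹
      = ∫ θ in (-π)..π, (s + b * Real.cos θ)⁻¹ := by
    rw [intervalIntegral.integral_of_le (by linarith [Real.pi_pos]),
      MeasureTheory.integral_Ioc_eq_integral_Ioo]
  rw [h1, h2]
  rw [intervalIntegral.integral_comp_sub_right (fun θ => (s + b * Real.cos θ)⁻¹) φ]
  have h3 := hper.intervalIntegral_add_eq (-π-φ) (-π)
  rw [show -π-φ+2*π = π - φ by ring, show -π+2*π = π by ring] at h3
  exact h3

lemma hinner (x : E2) (p : E2) : (inner ℝ x p : ℝ) = x 0 * p 0 + x 1 * p 1 := by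
  rw [PiLp.inner_apply, Fin.sum_univ_two]
  simp only [RCLike.inner_apply, conj_trivial]; ring

lemma sphere_univ_real : (((volume : Measure E2).toSphere) Set.univ).toReal = 2 * π := by
  have h := lemA (fun _ => (1:ℝ))
  rw [MeasureTheory.integral_const, MeasureTheory.integral_const] at h
  simp only [smul_eq_mul, mul_one, measureReal_def, Measure.restrict_apply, Set.univ_inter,
    MeasurableSet.univ, Real.volume_Ioo] at h
  rw [h, ENNReal.toReal_ofReal (by linarith [Real.pi_pos])]
  ring

theorem implicit_relation_dim2 (τ : ℝ) (hτ : 0 < τ)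
    (H : EuclideanSpace ℝ (Fin 2) → ℝ)
    (hH : ∀ p, H p = 1 / τ - Real.sqrt (((1 + τ) / τ) ^ 2 + (2 / τ) * ‖p‖ ^ 2)) :
    ∀ p : EuclideanSpace ℝ (Fin 2), p ≠ 0 →
      τ / (1 + τ) =
        ⨍ v : sphere (0 : EuclideanSpace ℝ (Fin 2)) 1,
          1 / (-H p + 1 / τ + Real.sqrt (2 / τ) * ⟪(v : EuclideanSpace ℝ (Fin 2)), p⟫)
          ∂((volume : Measure (EuclideanSpace ℝ (Fin 2))).toSphere) := by
  intro p hp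
  set s := Real.sqrt (((1 + τ) / τ) ^ 2 + (2 / τ) * ‖p‖ ^ 2) with hs
  set a := Real.sqrt (2 / τ) with ha
  have hapos : 0 < a := Real.sqrt_pos.mpr (by positivity)
  set c := a * p 0 with hc
  set d := a * p 1 with hd
  have hp2 : ‖p‖^2 = p 0^2 + p 1^2 := by
    rw [EuclideanSpace.norm_eq, Real.sq_sqrt (by positivity), Fin.sum_univ_two]
    simp [sq_abs]
  have ha2 : a^2 = 2/τ := Real.sq_sqrt (by positivity)
  have hcd : c^2 + d^2 = (2/τ) * ‖p‖^2 := by rw [hp2, hc, hd, ← ha2]; ring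
  set b := Real.sqrt (c^2 + d^2) with hb
  have hb2 : b^2 = c^2 + d^2 := Real.sq_sqrt (by positivity)
  have hbnn : 0 ≤ b := Real.sqrt_nonneg _
  have hττ : 0 < (1+τ)/τ := by positivity
  have hs2 : s^2 = ((1+τ)/τ)^2 + b^2 := by
    rw [hs, Real.sq_sqrt (by positivity), hb2, hcd]
  have hsb : |b| < s := by
    rw [abs_of_nonneg hbnn]
    have h1 : b^2 < s^2 := by rw [hs2]; nlinarith
    have h2 : 0 ≤ s := Real.sqrt_nonneg _
    nlinarith
  have hD : Real.sqrt (s^2 - b^2) = (1+τ)/τ := by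
    rw [hs2, show ((1+τ)/τ)^2 + b^2 - b^2 = ((1+τ)/τ)^2 by ring, Real.sqrt_sq hττ.le]
  have hz : (⟨c, d⟩ : ℂ) ≠ 0 := by
    intro h
    apply hp
    have hc0 : c = 0 := congrArg Complex.re h
    have hd0 : d = 0 := congrArg Complex.im h
    have hp0 : p 0 = 0 := by
      have := hc0; rw [hc] at this
      rcases mul_eq_zero.mp this with h' | h'
      · exact absurd h' hapos.ne'
      · exact h'
    have hp1 : p 1 = 0 := by
      have := hd0; rw [hd] at this
      rcases mul_eq_zero.mp this with h' | h'
      · exact absurd h' hapos.ne'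
      · exact h'
    ext i
    fin_cases i
    · exact hp0
    · exact hp1
  set φ := Complex.arg ⟨c, d⟩ with hφ
  have habs : ‖(⟨c, d⟩ : ℂ)‖ = b := by
    rw [Complex.norm_def, Complex.normSq_mk, hb]
    congr 1
    ring
  have hbpos : 0 < b := by
    rw [← habs]
    exact norm_pos_iff.mpr hz
  have hcos : Real.cos φ = c / b := by rw [hφ, Complex.cos_arg hz, habs]
  have hsin : Real.sin φ = d / b := by rw [hφ, Complex.sin_arg, habs]
  have hkey : ∀ θ, c * Real.cos θ + d * Real.sin θ = b * Real.cos (θ - φ) := by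
    intro θ
    rw [Real.cos_sub, hcos, hsin]
    field_simp
  have hHp : ∀ x : ℝ, -H p + 1/τ + x = s + x := by
    intro x; rw [hH p]; ring
  have hIeq : (∫ v : sphere (0 : E2) 1,
      1 / (-H p + 1 / τ + a * ⟪(v : E2), p⟫) ∂((volume : Measure E2).toSphere))
      = 2 * π * τ / (1+τ) := by
    have hA := lemA (fun v : sphere (0 : E2) 1 => 1 / (-H p + 1 / τ + a * ⟪(v : E2), p⟫))
    rw [hA]
    have hFc : ∀ θ : ℝ, 1 / (-H p + 1 / τ + a * ⟪((cpt θ : sphere (0:E2) 1) : E2), p⟫)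
        = (s + b * Real.cos (θ - φ))⁻¹ := by
      intro θ
      rw [one_div, hHp]
      congr 2
      rw [show ((cpt θ : sphere (0:E2) 1) : E2) = vθ θ from rfl, hinner]
      rw [show vθ θ 0 = Real.cos θ from rfl, show vθ θ 1 = Real.sin θ from rfl]
      rw [← hkey θ, hc, hd]
      ring
    rw [MeasureTheory.setIntegral_congr_fun measurableSet_Ioo (fun θ _ => hFc θ)]
    rw [shift_int s b φ, integral_Ioo_inv_add_cos s b hsb, hD]
    rw [div_div_eq_mul_div]
  rw [MeasureTheory.average_eq, measureReal_def, sphere_univ_real, hIeq, smul_eq_mul]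
  have hpi : (π:ℝ) ≠ 0 := Real.pi_ne_zero
  have h1t : (1+τ) ≠ 0 := by positivity
  field_simp
end
end

section
/- Let τ > 0 and H(p) = (1−τ)/(2τ) − √(((1+τ)/(2τ))² + p²/τ) for p ∈ ℝ. Then −max_{p ≠ 0} H(p)/|p| equals 2/(1+τ) if τ ≤ 1 and equals 1/√τ if τ ≥ 1. -/
theorem speed_dim1 (τ : ℝ) (hτ : 0 < τ)
    (H : ℝ → ℝ)
    (hH : ∀ p, H p = (1 - τ) / (2 * τ)
        - Real.sqrt (((1 + τ) / (2 * τ)) ^ 2 + p ^ 2 / τ)) :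
    (τ ≤ 1 → -(⨆ p : {p : ℝ // p ≠ 0}, H p / |(p : ℝ)|) = 2 / (1 + τ)) ∧
    (1 ≤ τ → -(⨆ p : {p : ℝ // p ≠ 0}, H p / |(p : ℝ)|) = 1 / Real.sqrt τ) := by
  have h1τ : (0:ℝ) < 1 + τ := by linarith
  have hsτ : 0 < Real.sqrt τ := Real.sqrt_pos.mpr hτ
  haveI : Nonempty {p : ℝ // p ≠ 0} := ⟨⟨1, one_ne_zero⟩⟩
  set f : {p : ℝ // p ≠ 0} → ℝ := fun p => H p / |(p : ℝ)| with hf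
  -- bound for τ ≤ 1
  have bound1 : τ ≤ 1 → ∀ p : ℝ, p ≠ 0 → H p / |p| ≤ -(2/(1+τ)) := by
    intro hτ1 p hp
    have hap : 0 < |p| := abs_pos.mpr hp
    rw [hH, div_le_iff₀ hap]
    have hR : 0 ≤ (1-τ)/(2*τ) + 2*|p|/(1+τ) := by
      have h1 : 0 ≤ (1-τ)/(2*τ) := div_nonneg (by linarith) (by linarith)
      have h2 : 0 ≤ 2*|p|/(1+τ) := by positivity
      linarith
    have key0 : ∀ q : ℝ, ((1-τ)/(2*τ) + 2*q/(1+τ))^2 ≤ ((1+τ)/(2*τ))^2 + q^2/τ := by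
      intro q
      rw [div_add_div _ _ (by positivity) (by positivity), div_pow, div_pow,
        div_add_div _ _ (by positivity) hτ.ne', div_le_div_iff₀ (by positivity) (by positivity)]
      nlinarith [mul_nonneg (pow_pos hτ 3).le (sq_nonneg ((1+τ) - (1-τ)*q)),
        mul_nonneg (pow_pos hτ 4).le (sq_nonneg ((1+τ) - (1-τ)*q)),
        mul_nonneg (pow_pos hτ 5).le (sq_nonneg ((1+τ) - (1-τ)*q))]
    have key : ((1-τ)/(2*τ) + 2*|p|/(1+τ))^2 ≤ ((1+τ)/(2*τ))^2 + p^2/τ := by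
      have := key0 |p|
      rwa [sq_abs] at this
    have hsq : (1-τ)/(2*τ) + 2*|p|/(1+τ) ≤ Real.sqrt (((1+τ)/(2*τ))^2 + p^2/τ) := by
      calc (1-τ)/(2*τ) + 2*|p|/(1+τ) = Real.sqrt (((1-τ)/(2*τ) + 2*|p|/(1+τ))^2) :=
            (Real.sqrt_sq hR).symm
        _ ≤ _ := Real.sqrt_le_sqrt key
    have : 2*|p|/(1+τ) = (2/(1+τ)) * |p| := by ring
    linarith [this ▸ hsq]
  -- bound for 1 ≤ τ
  have bound2 : 1 ≤ τ → ∀ p : ℝ, p ≠ 0 → H p / |p| ≤ -(1/Real.sqrt τ) := by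
    intro hτ1 p hp
    have hap : 0 < |p| := abs_pos.mpr hp
    rw [hH, div_le_iff₀ hap]
    have hB : (1-τ)/(2*τ) ≤ 0 := by
      apply div_nonpos_of_nonpos_of_nonneg <;> linarith
    have h1 : Real.sqrt (p^2/τ) ≤ Real.sqrt (((1+τ)/(2*τ))^2 + p^2/τ) :=
      Real.sqrt_le_sqrt (le_add_of_nonneg_left (by positivity))
    have h2 : Real.sqrt (p^2/τ) = |p| / Real.sqrt τ := by
      rw [Real.sqrt_div (sq_nonneg p), Real.sqrt_sq_eq_abs]
    have : -(1/Real.sqrt τ) * |p| = -(|p| / Real.sqrt τ) := by ring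
    rw [this]
    rw [h2] at h1
    linarith
  -- case τ < 1 : supremum attained
  have main1 : τ < 1 → (⨆ p : {p : ℝ // p ≠ 0}, H p / |(p : ℝ)|) = -(2/(1+τ)) := by
    intro hlt
    have hbdd : BddAbove (Set.range f) := by
      refine ⟨-(2/(1+τ)), ?_⟩
      rintro _ ⟨p, rfl⟩
      exact bound1 hlt.le p p.2
    have h1m : (0:ℝ) < 1 - τ := by linarith
    set p₀ : ℝ := (1+τ)/(1-τ) with hp₀
    have hp₀pos : 0 < p₀ := by positivity
    have hval : H p₀ / |p₀| = -(2/(1+τ)) := by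
      rw [hH, abs_of_pos hp₀pos]
      have hX : ((1+τ)/(2*τ))^2 + p₀^2/τ = ((1+τ)^2/(2*τ*(1-τ)))^2 := by
        rw [hp₀]; field_simp; ring
      rw [hX, Real.sqrt_sq (by positivity)]
      rw [hp₀]; field_simp; ring
    apply le_antisymm
    · exact ciSup_le fun p => bound1 hlt.le p p.2
    · calc -(2/(1+τ)) = f ⟨p₀, hp₀pos.ne'⟩ := hval.symm
        _ ≤ _ := le_ciSup hbdd _
  -- case 1 ≤ τ : supremum via limit
  have main2 : 1 ≤ τ → (⨆ p : {p : ℝ // p ≠ 0}, H p / |(p : ℝ)|) = -(1/Real.sqrt τ) := by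
    intro hτ1
    have hbdd : BddAbove (Set.range f) := by
      refine ⟨-(1/Real.sqrt τ), ?_⟩
      rintro _ ⟨p, rfl⟩
      exact bound2 hτ1 p p.2
    set φ : ℝ → ℝ := fun x => (1-τ)/(2*τ)*x - Real.sqrt (((1+τ)/(2*τ))^2*x^2 + 1/τ) with hφ
    have hcont : Continuous φ := by
      apply Continuous.sub
      · exact continuous_const.mul continuous_id
      · exact Real.continuous_sqrt.comp (by continuity)
    have hφ0 : φ 0 = -(1/Real.sqrt τ) := by
      simp [hφ, one_div, Real.sqrt_inv]
    have htend : Filter.Tendsto (fun p : ℝ => φ p⁻¹) Filter.atTop (nhds (-(1/Real.sqrt τ))) := by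
      rw [← hφ0]
      exact (hcont.tendsto 0).comp tendsto_inv_atTop_zero
    have heqv : ∀ p : ℝ, 0 < p → φ p⁻¹ = H p / |p| := by
      intro p hp
      rw [hH, abs_of_pos hp, hφ]
      have h1 : ((1+τ)/(2*τ))^2*(p⁻¹)^2 + 1/τ = (((1+τ)/(2*τ))^2 + p^2/τ) * (p⁻¹)^2 := by
        field_simp
      simp only [h1]
      rw [Real.sqrt_mul (by positivity), Real.sqrt_sq (by positivity)]
      field_simp
    apply le_antisymm
    · exact ciSup_le fun p => bound2 hτ1 p p.2
    · refine le_of_tendsto htend ?_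
      filter_upwards [Filter.eventually_ge_atTop (1:ℝ)] with p hp
      have hp0 : 0 < p := lt_of_lt_of_le one_pos hp
      rw [heqv p hp0]
      exact le_ciSup hbdd ⟨p, hp0.ne'⟩
  constructor
  · intro h
    rcases eq_or_lt_of_le h with heq | hlt
    · subst heq
      rw [main2 le_rfl, Real.sqrt_one]
      norm_num
    · rw [main1 hlt]; ring
  · intro h
    rw [main2 h]; ring
end

section
/- Let τ > 0 and H(p) = 1/τ − √(((1+τ)/τ)² + (2/τ)|p|²) for p ∈ ℝ². Then −sup_{p ≠ 0} H(p)/|p| = √(2(2+τ))/(1+τ), and the supremum is attained at |p| = (1+τ)√(2+τ)/√2. -/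
theorem speed_dim2 (τ : ℝ) (hτ : 0 < τ)
    (H : EuclideanSpace ℝ (Fin 2) → ℝ)
    (hH : ∀ p, H p = 1 / τ - Real.sqrt (((1 + τ) / τ) ^ 2 + (2 / τ) * ‖p‖ ^ 2)) :
    -(⨆ p : {p : EuclideanSpace ℝ (Fin 2) // p ≠ 0}, H p / ‖(p : EuclideanSpace ℝ (Fin 2))‖)
        = Real.sqrt (2 * (2 + τ)) / (1 + τ) ∧
    ∃ p : EuclideanSpace ℝ (Fin 2), p ≠ 0 ∧
      ‖p‖ = (1 + τ) * Real.sqrt (2 + τ) / Real.sqrt 2 ∧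
      H p / ‖p‖ =
        ⨆ q : {q : EuclideanSpace ℝ (Fin 2) // q ≠ 0}, H q / ‖(q : EuclideanSpace ℝ (Fin 2))‖ := by
  have h1τ : (0:ℝ) < 1 + τ := by linarith
  have h2τ : (0:ℝ) < 2 + τ := by linarith
  have hs2 : (0:ℝ) < Real.sqrt 2 := Real.sqrt_pos.mpr (by norm_num)
  have hs2τ : (0:ℝ) < Real.sqrt (2 + τ) := Real.sqrt_pos.mpr h2τ
  set c : ℝ := Real.sqrt (2 * (2 + τ)) / (1 + τ) with hc
  have hcmul : Real.sqrt (2 * (2 + τ)) = Real.sqrt 2 * Real.sqrt (2 + τ) :=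
    Real.sqrt_mul (by norm_num) _
  have hcpos : 0 < c := div_pos (Real.sqrt_pos.mpr (by positivity)) h1τ
  have hc2 : c ^ 2 * (1 + τ) ^ 2 = 2 * (2 + τ) := by
    rw [hc, div_pow, div_mul_cancel₀ _ (by positivity), Real.sq_sqrt (by positivity)]
  -- the main bound
  have key : ∀ r : ℝ, 0 < r →
      1 / τ - Real.sqrt (((1 + τ) / τ) ^ 2 + (2 / τ) * r ^ 2) ≤ -c * r := by
    intro r hr
    have h1 : 1 / τ + c * r ≤ Real.sqrt (((1 + τ) / τ) ^ 2 + (2 / τ) * r ^ 2) := by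
      rw [Real.le_sqrt (by positivity) (by positivity)]
      have h2 : (2 + τ) + 2 * r ^ 2 / (1 + τ) ^ 2 - 2 * c * r ≥ 0 := by
        have hsq : ((2 + τ) - c * r) ^ 2 ≥ 0 := sq_nonneg _
        have e : 2 * r ^ 2 / (1 + τ) ^ 2 = c ^ 2 * r ^ 2 / (2 + τ) := by
          rw [div_eq_div_iff (by positivity) (by positivity)]
          nlinarith [hc2]
        rw [e, ge_iff_le, ← sub_nonneg] at *
        have : ((2 + τ) + c ^ 2 * r ^ 2 / (2 + τ) - 2 * c * r) * (2 + τ) =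
            ((2 + τ) - c * r) ^ 2 := by field_simp; ring
        nlinarith [sq_nonneg ((2 + τ) - c * r)]
      have expand : (1 / τ + c * r) ^ 2 =
          1 / τ ^ 2 + 2 * c * r / τ + c ^ 2 * r ^ 2 := by field_simp; ring
      have expand2 : ((1 + τ) / τ) ^ 2 + (2 / τ) * r ^ 2 =
          1 / τ ^ 2 + (2 + τ) / τ + (2 / τ) * r ^ 2 := by field_simp; ring
      rw [expand, expand2]
      have hcc : c ^ 2 = 2 * (2 + τ) / (1 + τ) ^ 2 := by
        field_simp at hc2 ⊢; linarith [hc2]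
      have hdiff : (2 / τ) * r ^ 2 - c ^ 2 * r ^ 2 = (2 * r ^ 2 / (1 + τ) ^ 2) / τ := by
        rw [hcc]; field_simp; ring
      have h3 : 2 * c * r / τ ≤ (2 + τ) / τ + (2 * r ^ 2 / (1 + τ) ^ 2) / τ := by
        rw [← add_div, div_le_div_iff₀ hτ hτ]
        nlinarith [h2]
      linarith [h3, hdiff]
    linarith
  -- the maximizing point
  set r₀ : ℝ := (1 + τ) * Real.sqrt (2 + τ) / Real.sqrt 2 with hr₀
  have hr₀pos : 0 < r₀ := by positivity
  set p₀ : EuclideanSpace ℝ (Fin 2) := EuclideanSpace.single 0 r₀ with hp₀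
  have hnp₀ : ‖p₀‖ = r₀ := by
    rw [hp₀, EuclideanSpace.norm_single, Real.norm_eq_abs, abs_of_pos hr₀pos]
  have hp₀ne : p₀ ≠ 0 := by
    intro h
    have := congrArg (fun v : EuclideanSpace ℝ (Fin 2) => v 0) h
    simp [hp₀, EuclideanSpace.single_apply] at this
    exact (ne_of_gt hr₀pos) this
  -- value at p₀
  have hval : H p₀ / ‖p₀‖ = -c := by
    have hr₀sq : r₀ ^ 2 = (1 + τ) ^ 2 * (2 + τ) / 2 := by
      rw [hr₀, div_pow, mul_pow, Real.sq_sqrt h2τ.le, Real.sq_sqrt (by norm_num : (0:ℝ) ≤ 2)]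
    have hin : ((1 + τ) / τ) ^ 2 + (2 / τ) * r₀ ^ 2 = ((1 + τ) ^ 2 / τ) ^ 2 := by
      rw [hr₀sq]; field_simp; ring
    have hsqrt : Real.sqrt (((1 + τ) / τ) ^ 2 + (2 / τ) * r₀ ^ 2) = (1 + τ) ^ 2 / τ := by
      rw [hin, Real.sqrt_sq (by positivity)]
    have hHp : H p₀ = -(2 + τ) := by
      rw [hH, hnp₀, hsqrt]; field_simp; ring
    rw [hHp, hnp₀, hr₀, hc, hcmul]
    have e2 : Real.sqrt (2+τ) * Real.sqrt (2+τ) = 2 + τ :=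
      Real.mul_self_sqrt h2τ.le
    field_simp
    linear_combination e2
  -- the supremum
  have hne : Nonempty {p : EuclideanSpace ℝ (Fin 2) // p ≠ 0} := ⟨⟨p₀, hp₀ne⟩⟩
  have hbdd : BddAbove (Set.range fun p : {p : EuclideanSpace ℝ (Fin 2) // p ≠ 0} =>
      H (p : EuclideanSpace ℝ (Fin 2)) / ‖(p : EuclideanSpace ℝ (Fin 2))‖) := by
    refine ⟨-c, ?_⟩
    rintro x ⟨⟨p, hp⟩, rfl⟩
    have hnp : 0 < ‖p‖ := norm_pos_iff.mpr hp
    have := key ‖p‖ hnp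
    show H p / ‖p‖ ≤ -c
    rw [hH]
    calc (1 / τ - Real.sqrt (((1 + τ) / τ) ^ 2 + 2 / τ * ‖p‖ ^ 2)) / ‖p‖
        ≤ (-c * ‖p‖) / ‖p‖ := by apply div_le_div_of_nonneg_right ?_ hnp.le; exact this
      _ = -c := by field_simp
  have hsup : (⨆ p : {p : EuclideanSpace ℝ (Fin 2) // p ≠ 0},
      H (p : EuclideanSpace ℝ (Fin 2)) / ‖(p : EuclideanSpace ℝ (Fin 2))‖) = -c := by
    apply le_antisymm
    · apply ciSup_le
      rintro ⟨p, hp⟩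
      have hnp : 0 < ‖p‖ := norm_pos_iff.mpr hp
      have := key ‖p‖ hnp
      rw [hH]
      calc (1 / τ - Real.sqrt (((1 + τ) / τ) ^ 2 + 2 / τ * ‖p‖ ^ 2)) / ‖p‖
          ≤ (-c * ‖p‖) / ‖p‖ := by apply div_le_div_of_nonneg_right ?_ hnp.le; exact this
        _ = -c := by field_simp
    · rw [← hval]
      exact le_ciSup hbdd ⟨p₀, hp₀ne⟩
  constructor
  · rw [hsup, neg_neg]
  · exact ⟨p₀, hp₀ne, hnp₀, by rw [hsup, hval]⟩
end

section
/- Let τ > 0 and define H : ℝ → ℝ by H(p) = (1−τ)/(2τ) − √(((1+τ)/(2τ))² + p²/τ). Then its concave Legendre dual L(q) = inf_{p ∈ ℝ}(q·p − H(p)) satisfies: L(q) = −(1−τ)/(2τ) + ((1+τ)/(2τ))·√(1 − τq²) if τq² ≤ 1, and L(q) = −∞ if τq² > 1. -/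
theorem legendre_dual_dim1 (τ : ℝ) (hτ : 0 < τ)
    (H : ℝ → ℝ)
    (hH : ∀ p, H p = (1 - τ) / (2 * τ)
        - Real.sqrt (((1 + τ) / (2 * τ)) ^ 2 + p ^ 2 / τ)) :
    ∀ q : ℝ,
      (τ * q ^ 2 ≤ 1 →
        (⨅ p : ℝ, (q * p - H p))
          = -(1 - τ) / (2 * τ) + ((1 + τ) / (2 * τ)) * Real.sqrt (1 - τ * q ^ 2)) ∧
      (1 < τ * q ^ 2 → ¬ BddBelow (Set.range fun p : ℝ => q * p - H p)) := by
  intro q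
  set a : ℝ := (1 + τ) / (2 * τ) with ha
  set c : ℝ := (1 - τ) / (2 * τ) with hc
  clear_value a c
  have haPos : 0 < a := by rw [ha]; positivity
  constructor
  · intro hq1
    rw [show -(1 - τ) / (2 * τ) = -c by rw [hc]; ring]
    set s : ℝ := Real.sqrt (1 - τ * q ^ 2) with hs
    have hs0 : 0 ≤ s := Real.sqrt_nonneg _
    have hs2 : s ^ 2 = 1 - τ * q ^ 2 := Real.sq_sqrt (by linarith)
    clear_value s
    have key : ∀ p : ℝ, a * s - c ≤ q * p - H p := by
      intro p
      rw [hH]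
      have h1 : a * s - q * p ≤ Real.sqrt (a ^ 2 + p ^ 2 / τ) := by
        rcases le_or_gt (a * s - q * p) 0 with h | h
        · exact h.trans (Real.sqrt_nonneg _)
        · rw [Real.le_sqrt h.le]
          have hid : τ * a ^ 2 + p ^ 2
              = (a * τ * q + p * s) ^ 2 + τ * (a * s - q * p) ^ 2 := by
            linear_combination (-(p ^ 2) - τ * a ^ 2) * hs2
          have h10 : (a * s - q * p) ^ 2 * τ ≤ a ^ 2 * τ + p ^ 2 := by
            nlinarith [sq_nonneg (a * τ * q + p * s)]
          calc (a * s - q * p) ^ 2 = (a * s - q * p) ^ 2 * τ / τ := by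
                field_simp
            _ ≤ (a ^ 2 * τ + p ^ 2) / τ := by gcongr
            _ = a ^ 2 + p ^ 2 / τ := by field_simp
          positivity
      linarith
    have hbdd : BddBelow (Set.range fun p : ℝ => q * p - H p) := by
      refine ⟨a * s - c, ?_⟩
      rintro _ ⟨p, rfl⟩
      exact key p
    apply le_antisymm
    · rcases lt_or_eq_of_le hq1 with hlt | heq
      · have hspos : 0 < s := by nlinarith
        set p₀ : ℝ := -(τ * a * q) / s with hp₀
        have hval : q * p₀ - H p₀ = -c + a * s := by
          rw [hH]
          have h2 : a ^ 2 + p₀ ^ 2 / τ = (a / s) ^ 2 := by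
            rw [hp₀]
            field_simp
            linear_combination hs2
          rw [h2, Real.sqrt_sq (by positivity)]
          rw [hp₀]
          field_simp
          linear_combination (-a) * hs2
        calc (⨅ p : ℝ, (q * p - H p)) ≤ q * p₀ - H p₀ := ciInf_le hbdd p₀
          _ = -c + a * s := hval
      · have hs0' : s = 0 := by
          have : s ^ 2 = 0 := by rw [hs2]; linarith
          exact (pow_eq_zero_iff two_ne_zero).mp this
        rw [hs0', mul_zero, add_zero]
        apply le_of_forall_pos_le_add
        intro ε hε
        have hq2 : q ^ 2 = 1 / τ := by field_simp; linarith
        set T : ℝ := τ * a ^ 2 / (2 * ε) with hT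
        have hT0 : 0 < T := by rw [hT]; positivity
        clear_value T
        have hle : q * (-q * T) - H (-q * T) ≤ -c + ε := by
          rw [hH]
          have h3 : Real.sqrt (a ^ 2 + (-q * T) ^ 2 / τ) ≤ T / τ + ε := by
            have h4 : a ^ 2 + (-q * T) ^ 2 / τ ≤ (T / τ + ε) ^ 2 := by
              have h5 : (-q * T) ^ 2 / τ = (T / τ) ^ 2 := by
                rw [show (-q * T) ^ 2 = q ^ 2 * T ^ 2 by ring, hq2]
                field_simp
              rw [h5]
              have hTdiv : T / τ * ε * 2 = a ^ 2 := by
                rw [hT]; field_simp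
              nlinarith [sq_nonneg ε, sq_nonneg (T / τ)]
            calc Real.sqrt (a ^ 2 + (-q * T) ^ 2 / τ) ≤ Real.sqrt ((T / τ + ε) ^ 2) :=
                  Real.sqrt_le_sqrt h4
              _ = T / τ + ε := Real.sqrt_sq
                  (by linarith [div_nonneg hT0.le hτ.le])
          have hqT : q * (-q * T) = -(T / τ) := by
            rw [show q * (-q * T) = -(q ^ 2 * T) by ring, hq2]; field_simp
          rw [hqT]
          linarith
        calc (⨅ p : ℝ, (q * p - H p)) ≤ q * (-q * T) - H (-q * T) := ciInf_le hbdd _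
          _ ≤ -c + ε := hle
    · exact le_ciInf fun p => le_trans (le_of_eq (by ring)) (key p)
  · intro hq1
    rintro ⟨m, hm⟩
    have hq0 : q ^ 2 > 0 := by nlinarith
    set b : ℝ := Real.sqrt (q ^ 2 / τ) with hb
    have hb0 : 0 ≤ b := Real.sqrt_nonneg _
    have hb2 : b ^ 2 = q ^ 2 / τ := Real.sq_sqrt (by positivity)
    clear_value b
    have hbq : b < q ^ 2 := by
      have h5 : b ^ 2 < (q ^ 2) ^ 2 := by
        rw [hb2, div_lt_iff₀ hτ]
        nlinarith
      exact lt_of_pow_lt_pow_left₀ 2 (by positivity) h5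
    have hpos : 0 < q ^ 2 - b := by linarith
    obtain ⟨T, hT0, hTgt⟩ : ∃ T : ℝ, 0 < T ∧ a - c - m < (q ^ 2 - b) * T := by
      refine ⟨|a - c - m| / (q ^ 2 - b) + 1, ?_, ?_⟩
      · have h6 : 0 ≤ |a - c - m| / (q ^ 2 - b) := div_nonneg (abs_nonneg _) hpos.le
        linarith
      · have h7 : (q ^ 2 - b) * (|a - c - m| / (q ^ 2 - b) + 1)
            = |a - c - m| + (q ^ 2 - b) := by field_simp
        rw [h7]
        have := le_abs_self (a - c - m)
        linarith
    have habT : 0 ≤ a + b * T := by nlinarith [mul_nonneg hb0 hT0.le]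
    have hfle : q * (-q * T) - H (-q * T) < m := by
      rw [hH]
      have h7 : Real.sqrt (a ^ 2 + (-q * T) ^ 2 / τ) ≤ a + b * T := by
        have h8 : a ^ 2 + (-q * T) ^ 2 / τ ≤ (a + b * T) ^ 2 := by
          have h9 : (-q * T) ^ 2 / τ = (b * T) ^ 2 := by
            rw [mul_pow, mul_pow, hb2]
            field_simp
          rw [h9]
          nlinarith [mul_nonneg hb0 hT0.le]
        calc Real.sqrt (a ^ 2 + (-q * T) ^ 2 / τ) ≤ Real.sqrt ((a + b * T) ^ 2) :=
              Real.sqrt_le_sqrt h8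
          _ = a + b * T := Real.sqrt_sq habT
      nlinarith [h7, hTgt]
    have hmle : m ≤ q * (-q * T) - H (-q * T) := hm ⟨-q * T, rfl⟩
    linarith
end

section
/- Let H : ℝⁿ → ℝ be concave with H(p)/|p| → −a as |p| → ∞ for some a > 0, and suppose the supremum c := −sup_{p ≠ 0} H(p)/|p| is attained at some p_c ≠ 0. Let L(q) := inf_p (q·p − H(p)) be the concave dual. Then for every unit vector e, L(c e) = 0. -/
open Filter RealInnerProductSpace

theorem dual_vanishes_at_speed (n : ℕ) (hn : 1 ≤ n)
    (H : EuclideanSpace ℝ (Fin n) → ℝ) (a : ℝ) (ha : 0 < a)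
    (hconc : ConcaveOn ℝ Set.univ H)
    (hrot : ∀ p q : EuclideanSpace ℝ (Fin n), ‖p‖ = ‖q‖ → H p = H q)
    (h0 : H 0 < 0)
    (hlim : Tendsto (fun p : EuclideanSpace ℝ (Fin n) => H p / ‖p‖)
      (Filter.comap norm Filter.atTop) (nhds (-a)))
    (c : ℝ)
    (hc : c = -(⨆ p : {p : EuclideanSpace ℝ (Fin n) // p ≠ 0},
        H p / ‖(p : EuclideanSpace ℝ (Fin n))‖))
    (hattained : ∃ pc : EuclideanSpace ℝ (Fin n), pc ≠ 0 ∧ H pc / ‖pc‖ = -c) :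
    ∀ e : EuclideanSpace ℝ (Fin n), ‖e‖ = 1 →
      (⨅ p : EuclideanSpace ℝ (Fin n), (⟪c • e, p⟫ - H p)) = 0 := by
  obtain ⟨pc, hpc0, hpcv⟩ := hattained
  -- H p ≤ H 0 for all p
  have hmax : ∀ p : EuclideanSpace ℝ (Fin n), H p ≤ H 0 := by
    intro p
    have hcon := hconc.2 (Set.mem_univ p) (Set.mem_univ (-p))
      (by norm_num : (0:ℝ) ≤ 1/2) (by norm_num : (0:ℝ) ≤ 1/2) (by norm_num)
    have heq : H (-p) = H p := hrot _ _ (norm_neg p)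
    have hzero : (1/2 : ℝ) • p + (1/2 : ℝ) • (-p) = 0 := by
      simp [smul_neg]
    rw [hzero, heq] at hcon
    simp only [smul_eq_mul] at hcon
    linarith
  -- the sup is bounded above; each term ≤ sup
  haveI : Nonempty {p : EuclideanSpace ℝ (Fin n) // p ≠ 0} := ⟨⟨pc, hpc0⟩⟩
  have hbdd : BddAbove (Set.range fun p : {p : EuclideanSpace ℝ (Fin n) // p ≠ 0} =>
      H p / ‖(p : EuclideanSpace ℝ (Fin n))‖) := by
    refine ⟨0, ?_⟩
    rintro x ⟨⟨p, hp⟩, rfl⟩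
    have hpn : 0 < ‖p‖ := norm_pos_iff.mpr hp
    exact div_nonpos_of_nonpos_of_nonneg (le_of_lt (lt_of_le_of_lt (hmax p) h0)) hpn.le
  have hle : ∀ p : EuclideanSpace ℝ (Fin n), p ≠ 0 → H p / ‖p‖ ≤ -c := by
    intro p hp
    have := le_ciSup hbdd ⟨p, hp⟩
    linarith [this, hc.symm]
  -- c > 0
  have hcpos : 0 < c := by
    have hpn : 0 < ‖pc‖ := norm_pos_iff.mpr hpc0
    have : H pc / ‖pc‖ < 0 :=
      div_neg_of_neg_of_pos (lt_of_le_of_lt (hmax pc) h0) hpn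
    linarith [hpcv ▸ this]
  intro e he
  -- lower bound: every value is ≥ 0
  have hlb : ∀ p : EuclideanSpace ℝ (Fin n), (0:ℝ) ≤ ⟪c • e, p⟫ - H p := by
    intro p
    rcases eq_or_ne p 0 with rfl | hp
    · simp [inner_zero_right]; linarith
    · have hpn : 0 < ‖p‖ := norm_pos_iff.mpr hp
      have hH : H p ≤ -c * ‖p‖ := by
        have := hle p hp
        calc H p = (H p / ‖p‖) * ‖p‖ := by field_simp
        _ ≤ -c * ‖p‖ := by nlinarith
      have hcs : -(‖e‖ * ‖p‖) ≤ ⟪e, p⟫ := by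
        have := abs_real_inner_le_norm e p
        cases abs_le.mp this with
        | intro h1 h2 => linarith
      have hinner : ⟪c • e, p⟫ = c * ⟪e, p⟫ := real_inner_smul_left e p c
      rw [he] at hcs
      have : -c * ‖p‖ ≤ c * ⟪e, p⟫ := by nlinarith
      rw [hinner]; linarith
  have hbddb : BddBelow (Set.range fun p : EuclideanSpace ℝ (Fin n) =>
      ⟪c • e, p⟫ - H p) := ⟨0, by rintro x ⟨p, rfl⟩; exact hlb p⟩
  -- attainment at p* = (-‖pc‖) • e
  have hval : ⟪c • e, (-‖pc‖ : ℝ) • e⟫ - H ((-‖pc‖ : ℝ) • e) = 0 := by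
    have hnorm : ‖(-‖pc‖ : ℝ) • e‖ = ‖pc‖ := by
      rw [norm_smul, he]; simp
    have hHeq : H ((-‖pc‖ : ℝ) • e) = H pc := hrot _ _ (by rw [hnorm])
    have hHpc : H pc = -c * ‖pc‖ := by
      have hpn : 0 < ‖pc‖ := norm_pos_iff.mpr hpc0
      have := hpcv
      field_simp at this
      linarith
    have hinner : ⟪c • e, (-‖pc‖ : ℝ) • e⟫ = c * (-‖pc‖) * ⟪e, e⟫ := by
      rw [real_inner_smul_left, real_inner_smul_right]; ring
    have hee : ⟪e, e⟫ = (1:ℝ) := by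
      rw [real_inner_self_eq_norm_sq, he]; norm_num
    rw [hHeq, hHpc, hinner, hee]; ring
  refine le_antisymm ?_ (le_ciInf hlb)
  calc (⨅ p : EuclideanSpace ℝ (Fin n), (⟪c • e, p⟫ - H p))
      ≤ ⟪c • e, (-‖pc‖ : ℝ) • e⟫ - H ((-‖pc‖ : ℝ) • e) := ciInf_le hbddb _
    _ = 0 := hval
end

section
/- Let τ > 1 and set M = (1+τ)²/(4τ). Then M > 1, and for every ρ̂ ≥ 0 the quantity (1/τ)ρ̂ + (ρ̂ − M)·(ρ̂ − (M − 1))₊ is nonnegative, where x₊ = max(x,0). -/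
theorem a_priori_bound_algebra (τ : ℝ) (hτ : 1 < τ) :
    let M : ℝ := (1 + τ) ^ 2 / (4 * τ)
    1 < M ∧ ∀ ρ : ℝ, 0 ≤ ρ →
      0 ≤ (1 / τ) * ρ + (ρ - M) * max (ρ - (M - 1)) 0 := by
  intro M
  have hτ0 : (0:ℝ) < τ := by linarith
  have hM : M = (1 + τ) ^ 2 / (4 * τ) := rfl
  have h4τ : (0:ℝ) < 4 * τ := by linarith
  constructor
  · rw [hM, lt_div_iff₀ h4τ]
    nlinarith [sq_nonneg (τ - 1)]
  · intro ρ hρ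
    rcases le_or_gt (ρ - (M - 1)) 0 with h | h
    · rw [max_eq_right h, mul_zero, add_zero]
      positivity
    · rw [max_eq_left h.le]
      have hMe : M * (4 * τ) = (1 + τ) ^ 2 := by
        rw [hM, div_mul_cancel₀]; positivity
      have key : 0 ≤ ρ + τ * ((ρ - M) * (ρ - (M - 1))) := by
        nlinarith [sq_nonneg (τ * ρ - (M * τ - (τ + 1) / 2)), hMe]
      have heq : (1 / τ) * ρ + (ρ - M) * (ρ - (M - 1)) =
          (ρ + τ * ((ρ - M) * (ρ - (M - 1)))) / τ := by
        field_simp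
      rw [heq]
      exact div_nonneg key hτ0.le
end

section
/- Let τ > 0, n ≥ 1, and a = √(n/τ). Define H(p) for p ∈ ℝⁿ implicitly by τ/(1+τ) = ⨍_{S^{n−1}} dv/(−H(p) + 1/τ + a v·p), when the right-hand side, evaluated as a strictly decreasing function of −H(p), attains the value τ/(1+τ) with −H(p) + 1/τ > a|p|. Then on the open set where H is so defined, H is concave: for any unit vector ξ, ξᵀ D²H(p) ξ ≤ 0. -/
set_option maxHeartbeats 1000000


open MeasureTheory Metric RealInnerProductSpace


lemma concave_core {α : Type*} [MeasurableSpace α] [TopologicalSpace α] [OpensMeasurableSpace α]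
    [CompactSpace α] (ν : Measure α) [IsProbabilityMeasure ν]
    (m k : α → ℝ) (hm : Continuous m) (hk : Continuous k)
    (Mk : ℝ) (hMk : ∀ v, |k v| ≤ Mk)
    (g g1 g2 : ℝ → ℝ) (ε : ℝ) (hε : 0 < ε)
    (hg1 : ∀ t ∈ Set.Ioo (-ε) ε, HasDerivAt g (g1 t) t)
    (hg2 : ∀ t ∈ Set.Ioo (-ε) ε, HasDerivAt g1 (g2 t) t)
    (Mg1 : ℝ) (hMg1 : ∀ t ∈ Set.Ioo (-ε) ε, |g1 t| ≤ Mg1)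
    (Mg2 : ℝ) (hMg2 : ∀ t ∈ Set.Ioo (-ε) ε, |g2 t| ≤ Mg2)
    (δ : ℝ) (hδ : 0 < δ)
    (hc : ∀ t ∈ Set.Ioo (-ε) ε, ∀ v, δ ≤ -g t + m v + t * k v)
    (C : ℝ) (hC : ∀ t ∈ Set.Ioo (-ε) ε, ∫ v, (-g t + m v + t * k v)⁻¹ ∂ν = C) :
    g2 0 ≤ 0 := by
  have h0 : (0:ℝ) ∈ Set.Ioo (-ε) ε := ⟨by linarith, hε⟩
  set c : ℝ → α → ℝ := fun t v => -g t + m v + t * k v with hcdef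
  have contc : ∀ t, Continuous (c t) := fun t =>
    (continuous_const.add hm).add (continuous_const.mul hk)
  have hcpos : ∀ t ∈ Set.Ioo (-ε) ε, ∀ v, 0 < c t v := fun t ht v => lt_of_lt_of_le hδ (hc t ht v)
  have hcne : ∀ t ∈ Set.Ioo (-ε) ε, ∀ v, c t v ≠ 0 := fun t ht v => (hcpos t ht v).ne'
  have intC : ∀ φ : α → ℝ, Continuous φ → Integrable φ ν := fun φ hφ =>
    hφ.integrable_of_hasCompactSupport
      (IsCompact.of_isClosed_subset isCompact_univ (isClosed_tsupport φ) (Set.subset_univ _))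
  have hMg20 : 0 ≤ Mg2 := le_trans (abs_nonneg _) (hMg2 0 h0)
  set F : ℝ → ℝ := fun t => ∫ v, (c t v)⁻¹ ∂ν with hF
  set F1 : ℝ → ℝ := fun t => ∫ v, (g1 t - k v) / (c t v)^2 ∂ν with hF1
  -- first derivative
  have hderiv1 : ∀ t₀ ∈ Set.Ioo (-ε) ε, HasDerivAt F (F1 t₀) t₀ := by
    intro t₀ ht₀
    set r : ℝ := min (ε - t₀) (t₀ + ε) with hr
    have hrpos : 0 < r := lt_min (by linarith [ht₀.2]) (by linarith [ht₀.1])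
    have hball : ball t₀ r ⊆ Set.Ioo (-ε) ε := by
      intro x hx
      rw [mem_ball, Real.dist_eq] at hx
      have h1 := abs_lt.1 hx
      have h2 := min_le_right (ε - t₀) (t₀ + ε)
      have h3 := min_le_left (ε - t₀) (t₀ + ε)
      exact ⟨by nlinarith [h1.1], by nlinarith [h1.2]⟩
    have hF_meas : ∀ᶠ x in nhds t₀, AEStronglyMeasurable (fun v => (c x v)⁻¹) ν :=
      Filter.Eventually.of_forall fun x => ((contc x).aemeasurable.inv).aestronglyMeasurable
    have hF_int : Integrable (fun v => (c t₀ v)⁻¹) ν :=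
      intC _ ((contc t₀).inv₀ (hcne t₀ ht₀))
    have hF'_meas : AEStronglyMeasurable (fun v => (g1 t₀ - k v) / (c t₀ v)^2) ν :=
      ((continuous_const.sub hk).div ((contc t₀).pow 2)
        (fun v => pow_ne_zero _ (hcne t₀ ht₀ v))).aestronglyMeasurable
    have h_bound : ∀ᵐ v ∂ν, ∀ x ∈ ball t₀ r,
        ‖(g1 x - k v) / (c x v)^2‖ ≤ (Mg1 + Mk) / δ^2 := by
      refine Filter.Eventually.of_forall fun v x hx => ?_
      have hx' := hball hx
      have hcx := hc x hx' v
      have hcpx := hcpos x hx' v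
      rw [Real.norm_eq_abs, abs_div, abs_of_pos (pow_pos hcpx 2)]
      have h1 : |g1 x - k v| ≤ Mg1 + Mk :=
        (abs_sub _ _).trans (add_le_add (hMg1 x hx') (hMk v))
      have h2 : δ^2 ≤ (c x v)^2 := pow_le_pow_left₀ hδ.le hcx 2
      exact div_le_div₀ (le_trans (abs_nonneg _) h1) h1 (pow_pos hδ 2) h2
    have h_diff : ∀ᵐ v ∂ν, ∀ x ∈ ball t₀ r,
        HasDerivAt (fun y => (c y v)⁻¹) ((g1 x - k v) / (c x v)^2) x := by
      refine Filter.Eventually.of_forall fun v x hx => ?_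
      have hx' := hball hx
      have hder : HasDerivAt (fun y => c y v) (-g1 x + 1 * k v) x :=
        ((hg1 x hx').neg.add_const (m v)).add ((hasDerivAt_id x).mul_const (k v))
      have h := hder.fun_inv (hcne x hx' v)
      refine h.congr_deriv ?_
      ring
    exact (hasDerivAt_integral_of_dominated_loc_of_deriv_le (ball_mem_nhds t₀ hrpos) hF_meas hF_int hF'_meas
      h_bound (integrable_const _) h_diff).2
  -- F is locally constant, so F1 = 0 on the interval
  have hF1zero : ∀ t₀ ∈ Set.Ioo (-ε) ε, F1 t₀ = 0 := by
    intro t₀ ht₀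
    have heq : F =ᶠ[nhds t₀] fun _ => C :=
      Filter.eventuallyEq_of_mem (isOpen_Ioo.mem_nhds ht₀) (fun x hx => hC x hx)
    exact (hderiv1 t₀ ht₀).unique ((hasDerivAt_const t₀ C).congr_of_eventuallyEq heq)
  -- second derivative at 0
  have hball0 : ball (0:ℝ) ε ⊆ Set.Ioo (-ε) ε := by
    intro x hx
    rw [mem_ball, Real.dist_eq, sub_zero] at hx
    exact abs_lt.1 hx
  have hderiv2 : HasDerivAt F1
      (∫ v, g2 0 / (c 0 v)^2 + 2 * (g1 0 - k v)^2 / (c 0 v)^3 ∂ν) 0 := by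
    have hF_meas : ∀ᶠ x in nhds (0:ℝ),
        AEStronglyMeasurable (fun v => (g1 x - k v) / (c x v)^2) ν :=
      Filter.Eventually.of_forall fun x =>
        ((aemeasurable_const.sub hk.aemeasurable).div
          (((contc x).aemeasurable).pow_const 2)).aestronglyMeasurable
    have hF_int : Integrable (fun v => (g1 0 - k v) / (c 0 v)^2) ν :=
      intC _ ((continuous_const.sub hk).div ((contc 0).pow 2)
        (fun v => pow_ne_zero _ (hcne 0 h0 v)))
    have hF'_meas : AEStronglyMeasurable
        (fun v => g2 0 / (c 0 v)^2 + 2 * (g1 0 - k v)^2 / (c 0 v)^3) ν := by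
      have c1 : Continuous (fun v => g2 0 / (c 0 v)^2) :=
        continuous_const.div ((contc 0).pow 2) (fun v => pow_ne_zero _ (hcne 0 h0 v))
      have c2 : Continuous (fun v => 2 * (g1 0 - k v)^2 / (c 0 v)^3) :=
        (continuous_const.mul ((continuous_const.sub hk).pow 2)).div ((contc 0).pow 3)
          (fun v => pow_ne_zero _ (hcne 0 h0 v))
      exact (c1.add c2).aestronglyMeasurable
    have h_bound : ∀ᵐ v ∂ν, ∀ x ∈ ball (0:ℝ) ε,
        ‖g2 x / (c x v)^2 + 2 * (g1 x - k v)^2 / (c x v)^3‖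
          ≤ Mg2 / δ^2 + 2 * (Mg1 + Mk)^2 / δ^3 := by
      refine Filter.Eventually.of_forall fun v x hx => ?_
      have hx' := hball0 hx
      have hcx := hc x hx' v
      have hcpx := hcpos x hx' v
      have h1 : |g1 x - k v| ≤ Mg1 + Mk :=
        (abs_sub _ _).trans (add_le_add (hMg1 x hx') (hMk v))
      have h2 : δ^2 ≤ (c x v)^2 := pow_le_pow_left₀ hδ.le hcx 2
      have h3 : δ^3 ≤ (c x v)^3 := pow_le_pow_left₀ hδ.le hcx 3
      have hb1 : |g2 x / (c x v)^2| ≤ Mg2 / δ^2 := by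
        rw [abs_div, abs_of_pos (pow_pos hcpx 2)]
        exact div_le_div₀ hMg20 (hMg2 x hx') (pow_pos hδ 2) h2
      have hb2 : |2 * (g1 x - k v)^2 / (c x v)^3| ≤ 2 * (Mg1 + Mk)^2 / δ^3 := by
        rw [abs_div, abs_of_pos (pow_pos hcpx 3), abs_mul, abs_two, abs_of_nonneg (sq_nonneg _)]
        refine div_le_div₀ (by positivity) ?_ (pow_pos hδ 3) h3
        have h4 := sq_abs (g1 x - k v)
        nlinarith [abs_nonneg (g1 x - k v)]
      calc ‖g2 x / (c x v)^2 + 2 * (g1 x - k v)^2 / (c x v)^3‖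
          ≤ |g2 x / (c x v)^2| + |2 * (g1 x - k v)^2 / (c x v)^3| := abs_add_le _ _
        _ ≤ Mg2 / δ^2 + 2 * (Mg1 + Mk)^2 / δ^3 := add_le_add hb1 hb2
    have h_diff : ∀ᵐ v ∂ν, ∀ x ∈ ball (0:ℝ) ε,
        HasDerivAt (fun y => (g1 y - k v) / (c y v)^2)
          (g2 x / (c x v)^2 + 2 * (g1 x - k v)^2 / (c x v)^3) x := by
      refine Filter.Eventually.of_forall fun v x hx => ?_
      have hx' := hball0 hx
      have hcne' := hcne x hx' v
      have hu : HasDerivAt (fun y => g1 y - k v) (g2 x) x := (hg2 x hx').sub_const (k v)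
      have hcder : HasDerivAt (fun y => c y v) (-g1 x + 1 * k v) x :=
        ((hg1 x hx').neg.add_const (m v)).add ((hasDerivAt_id x).mul_const (k v))
      have hw : HasDerivAt (fun y => (c y v)^2) (2 * (c x v)^1 * (-g1 x + 1 * k v)) x := by
        simpa using hcder.fun_pow 2
      have h := hu.fun_div hw (pow_ne_zero _ hcne')
      refine h.congr_deriv ?_
      field_simp
      ring
    exact (hasDerivAt_integral_of_dominated_loc_of_deriv_le (ball_mem_nhds 0 hε) hF_meas hF_int hF'_meas
      h_bound (integrable_const _) h_diff).2
  -- F1 is 0 near 0, so its derivative is 0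
  have heq1 : F1 =ᶠ[nhds 0] fun _ => 0 :=
    Filter.eventuallyEq_of_mem (isOpen_Ioo.mem_nhds h0) (fun x hx => hF1zero x hx)
  have hzero : (∫ v, g2 0 / (c 0 v)^2 + 2 * (g1 0 - k v)^2 / (c 0 v)^3 ∂ν) = 0 :=
    hderiv2.unique ((hasDerivAt_const 0 (0:ℝ)).congr_of_eventuallyEq heq1)
  have int1 : Integrable (fun v => g2 0 / (c 0 v)^2) ν :=
    intC _ (continuous_const.div ((contc 0).pow 2) (fun v => pow_ne_zero _ (hcne 0 h0 v)))
  have int2 : Integrable (fun v => 2 * (g1 0 - k v)^2 / (c 0 v)^3) ν :=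
    intC _ ((continuous_const.mul ((continuous_const.sub hk).pow 2)).div ((contc 0).pow 3)
      (fun v => pow_ne_zero _ (hcne 0 h0 v)))
  rw [integral_add int1 int2] at hzero
  have hI1 : (∫ v, g2 0 / (c 0 v)^2 ∂ν) = g2 0 * ∫ v, ((c 0 v)^2)⁻¹ ∂ν := by
    rw [← integral_const_mul]
    simp_rw [div_eq_mul_inv]
  have hIpos : 0 < ∫ v, ((c 0 v)^2)⁻¹ ∂ν := by
    rw [integral_pos_iff_support_of_nonneg]
    · have hsupp : Function.support (fun v => ((c 0 v)^2)⁻¹) = Set.univ := by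
        ext v
        simp only [Function.mem_support, Set.mem_univ, iff_true]
        exact inv_ne_zero (pow_ne_zero _ (hcne 0 h0 v))
      rw [hsupp]
      simp [(IsProbabilityMeasure.ne_zero ν)]
    · intro v
      positivity
    · exact intC _ (((contc 0).pow 2).inv₀ (fun v => pow_ne_zero _ (hcne 0 h0 v)))
  have hnn : 0 ≤ ∫ v, 2 * (g1 0 - k v)^2 / (c 0 v)^3 ∂ν := by
    apply integral_nonneg
    intro v
    have h5 := hcpos 0 h0 v
    positivity
  rw [hI1] at hzero
  nlinarith [hIpos, hnn, hzero]

theorem implicit_hamiltonian_concave (n : ℕ) (hn : 1 ≤ n) (τ : ℝ) (hτ : 0 < τ)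
    (a : ℝ) (ha : a = Real.sqrt (n / τ))
    (U : Set (EuclideanSpace ℝ (Fin n))) (hU : IsOpen U)
    (H : EuclideanSpace ℝ (Fin n) → ℝ)
    (hreg : ContDiffOn ℝ 2 H U)
    (hdef : ∀ p ∈ U, a * ‖p‖ < -H p + 1 / τ ∧
      τ / (1 + τ) =
        ⨍ v : sphere (0 : EuclideanSpace ℝ (Fin n)) 1,
          1 / (-H p + 1 / τ + a * ⟪(v : EuclideanSpace ℝ (Fin n)), p⟫)
          ∂((volume : Measure (EuclideanSpace ℝ (Fin n))).toSphere)) :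
    ∀ p ∈ U, ∀ ξ : EuclideanSpace ℝ (Fin n), ‖ξ‖ = 1 →
      iteratedFDerivWithin ℝ 2 H U p ![ξ, ξ] ≤ 0 := by
  intro p hp ξ hξ
  have ha0 : 0 ≤ a := by rw [ha]; exact Real.sqrt_nonneg _
  set μ := (volume : Measure (EuclideanSpace ℝ (Fin n))).toSphere with hμdef
  set ν := (μ Set.univ)⁻¹ • μ with hνdef
  have hτ' : 0 < τ / (1 + τ) := by positivity
  have havg : ∀ x ∈ U, (∫ v : sphere (0 : EuclideanSpace ℝ (Fin n)) 1,
      (-H x + 1/τ + a * ⟪(v : EuclideanSpace ℝ (Fin n)), x⟫)⁻¹ ∂ν) = τ / (1+τ) := by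
    intro x hx
    have h := (hdef x hx).2
    rw [average_eq', ← hνdef] at h
    rw [h]
    congr 1
    funext v
    simp only [one_div]
  -- ν is a probability measure
  have hμ1 : μ Set.univ ≠ 0 := by
    intro h
    have hμz : μ = 0 := Measure.measure_univ_eq_zero.mp h
    have := havg p hp
    rw [hνdef, hμz] at this
    simp at this
    linarith
  have hμ2 : μ Set.univ ≠ ⊤ := by
    intro h
    have := havg p hp
    rw [hνdef, h] at this
    simp [ENNReal.inv_top] at this
    linarith
  haveI hνprob : IsProbabilityMeasure ν :=
    ⟨by rw [hνdef, Measure.smul_apply, smul_eq_mul, ENNReal.inv_mul_cancel hμ1 hμ2]⟩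
  -- the line through p in direction ξ
  set q : ℝ → EuclideanSpace ℝ (Fin n) := fun t => p + t • ξ with hqdef
  have hqc : Continuous q := continuous_const.add (continuous_id.smul continuous_const)
  have hq0 : q 0 = p := by simp [hqdef]
  obtain ⟨ε₁, hε₁, hball₁⟩ : ∃ ε > 0, ∀ t : ℝ, |t| < ε → q t ∈ U := by
    have hop : IsOpen (q ⁻¹' U) := hU.preimage hqc
    have h0m : (0:ℝ) ∈ q ⁻¹' U := by simp only [Set.mem_preimage, hq0]; exact hp
    rcases Metric.isOpen_iff.1 hop 0 h0m with ⟨ε, hε, hsub⟩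
    exact ⟨ε, hε, fun t ht => hsub (by simpa [Real.dist_eq] using ht)⟩
  set ε := ε₁ / 2 with hεdef
  have hεpos : 0 < ε := by positivity
  have hmemc : ∀ t ∈ Set.Icc (-ε) ε, q t ∈ U := by
    intro t ht
    apply hball₁
    rw [abs_lt]
    constructor <;> [linarith [ht.1]; linarith [ht.2]]
  have hmem : ∀ t ∈ Set.Ioo (-ε) ε, q t ∈ U := fun t ht =>
    hmemc t ⟨ht.1.le, ht.2.le⟩
  have h0Icc : (0:ℝ) ∈ Set.Icc (-ε) ε := ⟨by linarith, by linarith⟩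
  -- derivative data
  set G := fderiv ℝ H with hGdef
  have hHat : ∀ x ∈ U, ContDiffAt ℝ 2 H x := fun x hx => hreg.contDiffAt (hU.mem_nhds hx)
  have hqder : ∀ t : ℝ, HasDerivAt q ξ t := by
    intro t
    have h1 : HasDerivAt (fun s : ℝ => s • ξ) ((1:ℝ) • ξ) t := (hasDerivAt_id t).smul_const ξ
    simpa [hqdef] using h1.const_add p
  set g : ℝ → ℝ := fun t => H (q t) with hgdef
  set g1 : ℝ → ℝ := fun t => G (q t) ξ with hg1def
  set g2 : ℝ → ℝ := fun t => (fderiv ℝ G (q t) ξ) ξ with hg2def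
  have hg1 : ∀ t ∈ Set.Ioo (-ε) ε, HasDerivAt g (g1 t) t := by
    intro t ht
    have hd : DifferentiableAt ℝ H (q t) :=
      (hHat _ (hmem t ht)).differentiableAt (by norm_num)
    exact hd.hasFDerivAt.comp_hasDerivAt t (hqder t)
  have hGat : ∀ x ∈ U, ContDiffAt ℝ 1 G x := fun x hx =>
    (hHat x hx).fderiv_right (by norm_num)
  have hg2 : ∀ t ∈ Set.Ioo (-ε) ε, HasDerivAt g1 (g2 t) t := by
    intro t ht
    have hd : DifferentiableAt ℝ G (q t) := (hGat _ (hmem t ht)).differentiableAt one_ne_zero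
    have h1 : HasDerivAt (fun s => G (q s)) (fderiv ℝ G (q t) ξ) t :=
      hd.hasFDerivAt.comp_hasDerivAt t (hqder t)
    have h2 := h1.clm_apply (hasDerivAt_const t ξ)
    simpa using h2
  -- continuity and bounds
  have hg1cont : ContinuousOn g1 (Set.Icc (-ε) ε) := by
    have hGcont : ContinuousOn G U := hreg.continuousOn_fderiv_of_isOpen hU (by norm_num)
    have h1 : ContinuousOn (fun t => G (q t)) (Set.Icc (-ε) ε) :=
      hGcont.comp hqc.continuousOn hmemc
    exact (ContinuousLinearMap.apply ℝ ℝ ξ).continuous.comp_continuousOn h1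
  have hg2cont : ContinuousOn g2 (Set.Icc (-ε) ε) := by
    intro t ht
    have hx := hmemc t ht
    have hc0 : ContDiffAt ℝ 0 (fderiv ℝ G) (q t) := (hGat _ hx).fderiv_right (by norm_num)
    rcases contDiffAt_zero.1 hc0 with ⟨u, hu, hcu⟩
    have hca : ContinuousAt (fderiv ℝ G) (q t) := hcu.continuousAt hu
    have h1 : ContinuousAt (fun s => fderiv ℝ G (q s)) t := hca.comp hqc.continuousAt
    have h2 : ContinuousAt (fun s => fderiv ℝ G (q s) ξ) t :=
      ((ContinuousLinearMap.apply ℝ (EuclideanSpace ℝ (Fin n) →L[ℝ] ℝ) ξ).continuous.continuousAt).comp h1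
    have h3 : ContinuousAt (fun s => fderiv ℝ G (q s) ξ ξ) t :=
      ((ContinuousLinearMap.apply ℝ ℝ ξ).continuous.continuousAt).comp h2
    exact h3.continuousWithinAt
  obtain ⟨t₁, ht₁, hmax1⟩ := isCompact_Icc.exists_isMaxOn ⟨0, h0Icc⟩ hg1cont.abs
  obtain ⟨t₂, ht₂, hmax2⟩ := isCompact_Icc.exists_isMaxOn ⟨0, h0Icc⟩ hg2cont.abs
  set Mg1 := |g1 t₁|
  set Mg2 := |g2 t₂|
  have hMg1 : ∀ t ∈ Set.Ioo (-ε) ε, |g1 t| ≤ Mg1 := fun t ht =>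
    isMaxOn_iff.mp hmax1 t ⟨ht.1.le, ht.2.le⟩
  have hMg2 : ∀ t ∈ Set.Ioo (-ε) ε, |g2 t| ≤ Mg2 := fun t ht =>
    isMaxOn_iff.mp hmax2 t ⟨ht.1.le, ht.2.le⟩
  -- the positive lower bound δ
  set ρ : ℝ → ℝ := fun t => -H (q t) + 1/τ - a * ‖q t‖ with hρdef
  have hρcont : ContinuousOn ρ (Set.Icc (-ε) ε) := by
    have h1 : ContinuousOn (fun t => H (q t)) (Set.Icc (-ε) ε) :=
      hreg.continuousOn.comp hqc.continuousOn hmemc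
    exact (h1.neg.add continuousOn_const).sub
      (continuousOn_const.mul hqc.norm.continuousOn)
  obtain ⟨t₀, ht₀, hmin⟩ := isCompact_Icc.exists_isMinOn ⟨0, h0Icc⟩ hρcont
  set δ := ρ t₀ with hδdef
  have hδ : 0 < δ := by
    have := (hdef (q t₀) (hmemc t₀ ht₀)).1
    rw [hδdef, hρdef]
    simp only
    linarith
  -- the sphere functions
  set m : sphere (0 : EuclideanSpace ℝ (Fin n)) 1 → ℝ :=
    fun v => 1/τ + a * ⟪(v : EuclideanSpace ℝ (Fin n)), p⟫ with hmdef
  set k : sphere (0 : EuclideanSpace ℝ (Fin n)) 1 → ℝ :=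
    fun v => a * ⟪(v : EuclideanSpace ℝ (Fin n)), ξ⟫ with hkdef
  have hm : Continuous m :=
    continuous_const.add (continuous_const.mul (continuous_subtype_val.inner continuous_const))
  have hk : Continuous k :=
    continuous_const.mul (continuous_subtype_val.inner continuous_const)
  have hMk : ∀ v, |k v| ≤ a := by
    intro v
    rw [hkdef]
    simp only
    rw [abs_mul, abs_of_nonneg ha0]
    have h1 : |⟪(v : EuclideanSpace ℝ (Fin n)), ξ⟫| ≤ ‖(v : EuclideanSpace ℝ (Fin n))‖ * ‖ξ‖ :=
      abs_real_inner_le_norm _ _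
    rw [norm_eq_of_mem_sphere v, hξ] at h1
    nlinarith
  -- key algebraic identity
  have hkey : ∀ t : ℝ, ∀ v : sphere (0 : EuclideanSpace ℝ (Fin n)) 1,
      -g t + m v + t * k v
        = -H (q t) + 1/τ + a * ⟪(v : EuclideanSpace ℝ (Fin n)), q t⟫ := by
    intro t v
    rw [hgdef, hmdef, hkdef, hqdef]
    simp only [inner_add_right, real_inner_smul_right]
    ring
  have hc : ∀ t ∈ Set.Ioo (-ε) ε, ∀ v, δ ≤ -g t + m v + t * k v := by
    intro t ht v
    rw [hkey t v]
    have h1 : |⟪(v : EuclideanSpace ℝ (Fin n)), q t⟫|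
        ≤ ‖(v : EuclideanSpace ℝ (Fin n))‖ * ‖q t‖ := abs_real_inner_le_norm _ _
    rw [norm_eq_of_mem_sphere v, one_mul] at h1
    have h2 := abs_le.1 h1
    have h3 := isMinOn_iff.mp hmin t ⟨ht.1.le, ht.2.le⟩
    rw [hρdef] at h3
    simp only at h3
    nlinarith [h2.1]
  have hC : ∀ t ∈ Set.Ioo (-ε) ε, ∫ v, (-g t + m v + t * k v)⁻¹ ∂ν = τ / (1+τ) := by
    intro t ht
    have h1 := havg (q t) (hmem t ht)
    rw [← h1]
    congr 1
    funext v
    rw [hkey t v]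
  -- apply the core lemma
  have key : g2 0 ≤ 0 :=
    concave_core ν m k hm hk a hMk g g1 g2 ε hεpos hg1 hg2 Mg1 hMg1 Mg2 hMg2 δ hδ hc
      (τ/(1+τ)) hC
  -- translate back to the iterated derivative
  have e0 : iteratedFDerivWithin ℝ 2 H U p ![ξ, ξ]
      = fderivWithin ℝ (fderivWithin ℝ H U) U p ξ ξ := by
    rw [iteratedFDerivWithin_two_apply H hU.uniqueDiffOn hp]
    rfl
  have e1 : fderivWithin ℝ (fderivWithin ℝ H U) U p = fderiv ℝ (fderivWithin ℝ H U) p :=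
    fderivWithin_of_isOpen hU hp
  have e2 : fderivWithin ℝ H U =ᶠ[nhds p] fderiv ℝ H :=
    Filter.eventuallyEq_of_mem (hU.mem_nhds hp) (fun x hx => fderivWithin_of_isOpen hU hx)
  have e3 : fderiv ℝ (fderivWithin ℝ H U) p = fderiv ℝ (fderiv ℝ H) p := e2.fderiv_eq
  have e4 : g2 0 = fderiv ℝ (fderiv ℝ H) p ξ ξ := by
    rw [hg2def]
    simp only [hq0, hGdef]
  rw [e0, e1, e3, ← e4]
  exact key
end
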